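/- Let α₁, α₂ > 0 be real numbers, let Q : ℝ⁴ → ℝ be Q(x) = (α₁/2)(x₁² + x₂²) + (α₂/2)(x₃² + x₄²), and let γ = −log ∘ Q on ℝ⁴ \ {0} (note Q > 0 there). Then the equation Δγ(x) + ‖∇γ(x)‖² = 0 holds for every x ∈ ℝ⁴ \ {0} if and only if α₁ = α₂. (This is the characterization in the paper's Example 5.2 for complex dimension n = 2: among the candidate conformal factors γ = (1/(n−3)) log(Σ_k (α_k/2)(x_{2k−1}² + x_{2k}²)), the biharmonicity equation Δγ + (n−1)|∇γ|² = 0 is satisfied precisely when the rotation coefficients are equal.) -/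

import Mathlib

/-- The Laplacian of `ψ` with respect to an orthonormal basis `b` of `E`:
`Δψ(x) = Σ_i D²ψ(x)(bᵢ, bᵢ)`. -/
noncomputable def lap {E : Type*} [NormedAddCommGroup E] [InnerProductSpace ℝ E]
    {F : Type*} [NormedAddCommGroup F] [NormedSpace ℝ F]
    {ι : Type*} [Fintype ι] (b : OrthonormalBasis ι ℝ E) (ψ : E → F) (x : E) : F :=
  ∑ i, fderiv ℝ (fderiv ℝ ψ) x (b i) (b i)

namespace ExampleC2Aux

noncomputable abbrev Eu := EuclideanSpace ℝ (Fin 4)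

noncomputable def pr (i : Fin 4) : Eu →L[ℝ] ℝ := EuclideanSpace.proj i

noncomputable def Lmap (α₁ α₂ : ℝ) : Eu →L[ℝ] (Eu →L[ℝ] ℝ) :=
  α₁ • ((pr 0).smulRight (pr 0) + (pr 1).smulRight (pr 1)) +
  α₂ • ((pr 2).smulRight (pr 2) + (pr 3).smulRight (pr 3))

set_option synthInstance.maxHeartbeats 200000 in
theorem Lmap_apply (α₁ α₂ : ℝ) (x v : Eu) :
    Lmap α₁ α₂ x v = α₁ * (x 0 * v 0 + x 1 * v 1) + α₂ * (x 2 * v 2 + x 3 * v 3) := by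
  simp [Lmap, pr]; ring

theorem hasQ (α₁ α₂ : ℝ) (Q : Eu → ℝ)
    (hQ : ∀ x : Eu, Q x = α₁ / 2 * (x 0 ^ 2 + x 1 ^ 2) + α₂ / 2 * (x 2 ^ 2 + x 3 ^ 2)) (x : Eu) :
    HasFDerivAt Q (Lmap α₁ α₂ x) x := by
  have h : ∀ i : Fin 4, HasFDerivAt (fun y : Eu => y i) (pr i) x :=
    fun i => (pr i).hasFDerivAt
  have h2 : ∀ i : Fin 4, HasFDerivAt (fun y : Eu => (y i) ^ 2)
      (x i • pr i + x i • pr i) x := by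
    intro i
    refine ((h i).mul (h i)).congr_of_eventuallyEq ?_
    filter_upwards with y
    simp [sq]
  have key := ((((h2 0).add (h2 1)).const_mul (α₁/2)).add (((h2 2).add (h2 3)).const_mul (α₂/2)))
  have hfun : Q = fun y : Eu => α₁/2 * ((y 0)^2 + (y 1)^2) + α₂/2 * ((y 2)^2 + (y 3)^2) :=
    funext hQ
  rw [hfun]
  refine key.congr_fderiv ?_
  ext v
  simp [Lmap_apply, pr]
  ring

theorem Qpos (α₁ α₂ : ℝ) (h₁ : 0 < α₁) (h₂ : 0 < α₂) (Q : Eu → ℝ)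
    (hQ : ∀ x : Eu, Q x = α₁ / 2 * (x 0 ^ 2 + x 1 ^ 2) + α₂ / 2 * (x 2 ^ 2 + x 3 ^ 2))
    (x : Eu) (hx : x ≠ 0) : 0 < Q x := by
  obtain ⟨i, hi⟩ : ∃ i, x i ≠ 0 := by
    by_contra h
    push_neg at h
    exact hx (PiLp.ext (by simpa using h))
  rw [hQ]
  have h0 := sq_nonneg (x 0); have hh1 := sq_nonneg (x 1)
  have h2' := sq_nonneg (x 2); have h3 := sq_nonneg (x 3)
  have : 0 < x i ^ 2 := by positivity
  fin_cases i <;>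
    first
      | (have h' : (0:ℝ) < x 0 ^ 2 := this; nlinarith)
      | (have h' : (0:ℝ) < x 1 ^ 2 := this; nlinarith)
      | (have h' : (0:ℝ) < x 2 ^ 2 := this; nlinarith)
      | (have h' : (0:ℝ) < x 3 ^ 2 := this; nlinarith)

theorem hasGamma (α₁ α₂ : ℝ) (Q : Eu → ℝ)
    (hQ : ∀ x : Eu, Q x = α₁ / 2 * (x 0 ^ 2 + x 1 ^ 2) + α₂ / 2 * (x 2 ^ 2 + x 3 ^ 2))
    (x : Eu) (hx : Q x ≠ 0) :
    HasFDerivAt (fun y => -Real.log (Q y)) (-((Q x)⁻¹ • Lmap α₁ α₂ x)) x :=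
  (((hasQ α₁ α₂ Q hQ x).log hx).neg)

theorem hasPhi (α₁ α₂ : ℝ) (Q : Eu → ℝ)
    (hQ : ∀ x : Eu, Q x = α₁ / 2 * (x 0 ^ 2 + x 1 ^ 2) + α₂ / 2 * (x 2 ^ 2 + x 3 ^ 2))
    (x : Eu) (hx : Q x ≠ 0) :
    HasFDerivAt (fun y => -((Q y)⁻¹ • Lmap α₁ α₂ y))
      (-((Q x)⁻¹ • (Lmap α₁ α₂) +
        ((-(Q x ^ 2)⁻¹) • Lmap α₁ α₂ x).smulRight (Lmap α₁ α₂ x))) x := by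
  have hc : HasFDerivAt (fun y => (Q y)⁻¹) ((-(Q x ^ 2)⁻¹) • Lmap α₁ α₂ x) x := by
    have := (hasDerivAt_inv hx).comp_hasFDerivAt x (hasQ α₁ α₂ Q hQ x)
    exact this
  exact (hc.smul (Lmap α₁ α₂).hasFDerivAt).neg

section derivs
variable (α₁ α₂ : ℝ) (h₁ : 0 < α₁) (h₂ : 0 < α₂) (Q : Eu → ℝ)
    (hQ : ∀ x : Eu, Q x = α₁ / 2 * (x 0 ^ 2 + x 1 ^ 2) + α₂ / 2 * (x 2 ^ 2 + x 3 ^ 2))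
    (γ : Eu → ℝ) (hγ : ∀ x : Eu, x ≠ 0 → γ x = -Real.log (Q x))

include h₁ h₂ hQ hγ

theorem fderiv_gamma (x : Eu) (hx : x ≠ 0) :
    fderiv ℝ γ x = -((Q x)⁻¹ • Lmap α₁ α₂ x) := by
  have hne : Q x ≠ 0 := (Qpos α₁ α₂ h₁ h₂ Q hQ x hx).ne'
  have hev : γ =ᶠ[nhds x] fun y => -Real.log (Q y) :=
    Filter.eventuallyEq_of_mem (isOpen_compl_singleton.mem_nhds hx) fun y hy => hγ y hy
  exact ((hasGamma α₁ α₂ Q hQ x hne).congr_of_eventuallyEq hev).fderiv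

theorem second_gamma (x : Eu) (hx : x ≠ 0) :
    fderiv ℝ (fderiv ℝ γ) x =
      -((Q x)⁻¹ • (Lmap α₁ α₂) +
        ((-(Q x ^ 2)⁻¹) • Lmap α₁ α₂ x).smulRight (Lmap α₁ α₂ x)) := by
  have hne : Q x ≠ 0 := (Qpos α₁ α₂ h₁ h₂ Q hQ x hx).ne'
  have hev : fderiv ℝ γ =ᶠ[nhds x] fun y => -((Q y)⁻¹ • Lmap α₁ α₂ y) :=
    Filter.eventuallyEq_of_mem (isOpen_compl_singleton.mem_nhds hx)
      fun y hy => fderiv_gamma α₁ α₂ h₁ h₂ Q hQ γ hγ y hy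
  rw [hev.fderiv_eq]
  exact (hasPhi α₁ α₂ Q hQ x hne).fderiv

theorem lap_val (x : Eu) (hx : x ≠ 0) :
    lap (EuclideanSpace.basisFun (Fin 4) ℝ) γ x
      = (Q x)⁻¹ ^ 2 * (α₁ ^ 2 * (x 0 ^ 2 + x 1 ^ 2) + α₂ ^ 2 * (x 2 ^ 2 + x 3 ^ 2))
        - (Q x)⁻¹ ^ 2 * (α₁ + α₂) * (2 * Q x) := by
  have hs := second_gamma α₁ α₂ h₁ h₂ Q hQ γ hγ x hx
  have hne : Q x ≠ 0 := (Qpos α₁ α₂ h₁ h₂ Q hQ x hx).ne'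
  unfold lap
  rw [Fin.sum_univ_four, hs]
  simp only [ContinuousLinearMap.neg_apply, ContinuousLinearMap.add_apply,
    ContinuousLinearMap.smul_apply, ContinuousLinearMap.smulRight_apply,
    EuclideanSpace.basisFun_apply, smul_eq_mul, Lmap_apply, EuclideanSpace.single_apply]
  simp +decide only [reduceIte]
  norm_num
  field_simp
  ring

theorem grad_val (x : Eu) (hx : x ≠ 0) :
    ‖gradient γ x‖ ^ 2
      = (Q x)⁻¹ ^ 2 * (α₁ ^ 2 * (x 0 ^ 2 + x 1 ^ 2) + α₂ ^ 2 * (x 2 ^ 2 + x 3 ^ 2)) := by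
  have hfd := fderiv_gamma α₁ α₂ h₁ h₂ Q hQ γ hγ x hx
  have hco : ∀ i, (gradient γ x) i = (fderiv ℝ γ x) (EuclideanSpace.single i 1) := by
    intro i
    have h := InnerProductSpace.toDual_symm_apply (𝕜 := ℝ) (E := Eu)
      (x := EuclideanSpace.single i 1) (y := fderiv ℝ γ x)
    rw [← h]
    rw [show (InnerProductSpace.toDual ℝ Eu).symm (fderiv ℝ γ x) = gradient γ x from rfl]
    rw [real_inner_comm]
    rw [EuclideanSpace.inner_single_left]
    simp
  have hn : ‖gradient γ x‖ ^ 2 = ∑ i, (gradient γ x i) * (gradient γ x i) := by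
    rw [← real_inner_self_eq_norm_sq]
    rw [PiLp.inner_apply]
    simp [sq]
  rw [hn, Fin.sum_univ_four]
  simp only [hco, hfd, ContinuousLinearMap.neg_apply, ContinuousLinearMap.smul_apply,
    smul_eq_mul, Lmap_apply, EuclideanSpace.single_apply]
  simp +decide only [reduceIte]
  norm_num
  ring

end derivs

end ExampleC2Aux

open ExampleC2Aux in
/-- Example 5.2 of the paper, complex dimension n = 2: with
`Q(x) = (α₁/2)(x₁² + x₂²) + (α₂/2)(x₃² + x₄²)` and `γ = -log ∘ Q` on `ℝ⁴ \ {0}`,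
the equation `Δγ + ‖∇γ‖² = 0` holds on `ℝ⁴ \ {0}` iff `α₁ = α₂`. -/
theorem example_C2_characterization
    (α₁ α₂ : ℝ) (h₁ : 0 < α₁) (h₂ : 0 < α₂)
    (Q : EuclideanSpace ℝ (Fin 4) → ℝ)
    (hQ : ∀ x : EuclideanSpace ℝ (Fin 4),
      Q x = α₁ / 2 * (x 0 ^ 2 + x 1 ^ 2) + α₂ / 2 * (x 2 ^ 2 + x 3 ^ 2))
    (γ : EuclideanSpace ℝ (Fin 4) → ℝ)
    (hγ : ∀ x : EuclideanSpace ℝ (Fin 4), x ≠ 0 → γ x = -Real.log (Q x)) :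
    (∀ x : EuclideanSpace ℝ (Fin 4), x ≠ 0 →
        lap (EuclideanSpace.basisFun (Fin 4) ℝ) γ x + ‖gradient γ x‖ ^ 2 = 0)
      ↔ α₁ = α₂ := by
  have key : ∀ x : Eu, x ≠ 0 →
      lap (EuclideanSpace.basisFun (Fin 4) ℝ) γ x + ‖gradient γ x‖ ^ 2
        = (Q x)⁻¹ ^ 2 * (2 * (α₁ ^ 2 * (x 0 ^ 2 + x 1 ^ 2) + α₂ ^ 2 * (x 2 ^ 2 + x 3 ^ 2))
            - (α₁ + α₂) * (2 * Q x)) := by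
    intro x hx
    rw [lap_val α₁ α₂ h₁ h₂ Q hQ γ hγ x hx, grad_val α₁ α₂ h₁ h₂ Q hQ γ hγ x hx]
    ring
  constructor
  · intro h
    set x₀ : Eu := EuclideanSpace.single 0 (1:ℝ) with hx₀def
    have hx0 : x₀ ≠ 0 := by
      intro hc
      have h00 := congrArg (fun y : Eu => y 0) hc
      simp [hx₀def, EuclideanSpace.single_apply] at h00
    have he := h x₀ hx0
    rw [key x₀ hx0] at he
    have hc0 : x₀ 0 = 1 := by simp [hx₀def, EuclideanSpace.single_apply]
    have hc1 : x₀ 1 = 0 := by simp +decide [hx₀def, EuclideanSpace.single_apply]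
    have hc2 : x₀ 2 = 0 := by simp +decide [hx₀def, EuclideanSpace.single_apply]
    have hc3 : x₀ 3 = 0 := by simp +decide [hx₀def, EuclideanSpace.single_apply]
    have hq : Q x₀ = α₁ / 2 := by rw [hQ, hc0, hc1, hc2, hc3]; ring
    rw [hq, hc0, hc1, hc2, hc3] at he
    have hne : α₁ ≠ 0 := h₁.ne'
    field_simp at he
    have h5 : α₁ * (α₁ - α₂) = 0 := by linear_combination he / 4
    rcases mul_eq_zero.1 h5 with h6 | h6
    · exact absurd h6 hne
    · linarith
  · intro hα x hx
    have hne : Q x ≠ 0 := (Qpos α₁ α₂ h₁ h₂ Q hQ x hx).ne'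
    rw [key x hx]
    rw [← hα] at hQ ⊢
    rw [hQ x]
    ring
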